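/- Let $k^+ > 0$ and $k^- < 0$ with $|k^-|/k^+ \ne 1$, and set $(k_1, k_2, k_3) = (k^-, k^+, k^+)$. Then for every tuple of continuous functions $f_j : [0,1] \to \mathbb{R}$ ($j = 1,2,3$) there exists a unique tuple of twice continuously differentiable functions $\psi_j : [0,1] \to \mathbb{R}$ satisfying: $-k_j \psi_j'' = f_j$ on $[0,1]$ for $j=1,2,3$; $\psi_3(0) = 0$; $\psi_1(0) = \psi_2(0)$; $k_1 \psi_1'(0) + k_2 \psi_2'(0) = 0$; $\psi_1(1) = \psi_2(1) = \psi_3(1)$; and $k_1 \psi_1'(1) + k_2 \psi_2'(1) + k_3 \psi_3'(1) = 0$. -/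

import Mathlib

open Set intervalIntegral MeasureTheory

noncomputable def TadpolePrim (g : ℝ → ℝ) (x : ℝ) : ℝ := ∫ t in (0:ℝ)..x, g t

lemma tadpolePrim_hasDerivAt {g : ℝ → ℝ} (hg : Continuous g) (x : ℝ) :
    HasDerivAt (TadpolePrim g) (g x) x :=
  integral_hasDerivAt_right (hg.intervalIntegrable _ _)
    (hg.stronglyMeasurable.stronglyMeasurableAtFilter) hg.continuousAt

lemma tadpolePrim_zero (g : ℝ → ℝ) : TadpolePrim g 0 = 0 := by
  simp [TadpolePrim]

lemma tadpolePrim_continuous {g : ℝ → ℝ} (hg : Continuous g) : Continuous (TadpolePrim g) :=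
  (Differentiable.continuous fun x => (tadpolePrim_hasDerivAt hg x).differentiableAt)

lemma tadpolePrim_deriv {g : ℝ → ℝ} (hg : Continuous g) :
    deriv (TadpolePrim g) = g := funext fun x => (tadpolePrim_hasDerivAt hg x).deriv

lemma tadpolePrim_differentiable {g : ℝ → ℝ} (hg : Continuous g) :
    Differentiable ℝ (TadpolePrim g) :=
  fun x => (tadpolePrim_hasDerivAt hg x).differentiableAt

/-- second iterated derivative within a unique-diff set of a globally C¹-with-diff-deriv fn -/
lemma iteratedDerivWithin_two_eq {ψ : ℝ → ℝ} (hψ : Differentiable ℝ ψ)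
    {s : Set ℝ} (hs : UniqueDiffOn ℝ s) {x : ℝ} (hx : x ∈ s)
    (hψ' : Differentiable ℝ (deriv ψ)) :
    iteratedDerivWithin 2 ψ s x = deriv (deriv ψ) x := by
  rw [show (2:ℕ) = 1 + 1 from rfl, iteratedDerivWithin_succ]
  have heq : Set.EqOn (iteratedDerivWithin 1 ψ s) (deriv ψ) s := by
    intro y hy
    rw [iteratedDerivWithin_one, (hψ y).derivWithin (hs y hy)]
  rw [derivWithin_congr heq (heq hx), (hψ' x).derivWithin (hs x hx)]

lemma derivWithin_eq_deriv' {ψ : ℝ → ℝ} (hψ : Differentiable ℝ ψ)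
    {s : Set ℝ} (hs : UniqueDiffOn ℝ s) {x : ℝ} (hx : x ∈ s) :
    derivWithin ψ s x = deriv ψ x := (hψ x).derivWithin (hs x hx)

/-- Master facts for `ψ x = a + b x + F x` where `F = ∫∫ g`. -/
lemma tadpole_master {g : ℝ → ℝ} (hg : Continuous g) (a b : ℝ) :
    ContDiffOn ℝ 2 (fun x : ℝ => a + b * x + TadpolePrim (TadpolePrim g) x) (Icc 0 1) ∧
    (∀ x ∈ Icc (0:ℝ) 1, iteratedDerivWithin 2
        (fun x : ℝ => a + b * x + TadpolePrim (TadpolePrim g) x) (Icc 0 1) x = g x) ∧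
    (∀ x ∈ Icc (0:ℝ) 1, derivWithin
        (fun x : ℝ => a + b * x + TadpolePrim (TadpolePrim g) x) (Icc 0 1) x
        = b + TadpolePrim g x) := by
  set G := TadpolePrim g with hGdef
  set F := TadpolePrim G with hFdef
  set ψ := fun x : ℝ => a + b * x + F x with hψdef
  have hG : Continuous G := tadpolePrim_continuous hg
  have hUD : UniqueDiffOn ℝ (Icc (0:ℝ) 1) := uniqueDiffOn_Icc one_pos
  have hψd : ∀ x : ℝ, HasDerivAt ψ (b + G x) x := by
    intro x
    have h1 : HasDerivAt (fun y : ℝ => a + b * y) (b * 1) x :=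
      ((hasDerivAt_id x).const_mul b).const_add a
    have := h1.add (tadpolePrim_hasDerivAt hG x); rw [mul_one] at this; exact this
  have hψdiff : Differentiable ℝ ψ := fun x => (hψd x).differentiableAt
  have hderiv : deriv ψ = fun x => b + G x := funext fun x => (hψd x).deriv
  have hψ'd : ∀ x : ℝ, HasDerivAt (deriv ψ) (g x) x := by
    intro x
    rw [hderiv]
    exact (tadpolePrim_hasDerivAt hg x).const_add b
  have hψ'diff : Differentiable ℝ (deriv ψ) := fun x => (hψ'd x).differentiableAt
  refine ⟨?_, ?_, ?_⟩
  · have : ContDiff ℝ 2 ψ := by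
      rw [show (2 : WithTop ℕ∞) = 1 + 1 by norm_num, contDiff_succ_iff_deriv]
      refine ⟨hψdiff, by simp, ?_⟩
      rw [contDiff_one_iff_deriv]
      exact ⟨hψ'diff, by rw [funext fun x => (hψ'd x).deriv]; exact hg⟩
    exact this.contDiffOn
  · intro x hx
    rw [iteratedDerivWithin_two_eq hψdiff hUD hx hψ'diff, (hψ'd x).deriv]
  · intro x hx
    rw [derivWithin_eq_deriv' hψdiff hUD hx, (hψd x).deriv]

/-- Any C² function on `[0,1]` whose 2nd derivative within vanishes is affine. -/
lemma tadpole_affine {h : ℝ → ℝ} (hC : ContDiffOn ℝ 2 h (Icc 0 1))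
    (h2 : ∀ x ∈ Icc (0:ℝ) 1, iteratedDerivWithin 2 h (Icc 0 1) x = 0) :
    (∀ x ∈ Icc (0:ℝ) 1, derivWithin h (Icc 0 1) x = derivWithin h (Icc 0 1) 0) ∧
    (∀ x ∈ Icc (0:ℝ) 1, h x = h 0 + derivWithin h (Icc 0 1) 0 * x) := by
  have hUD : UniqueDiffOn ℝ (Icc (0:ℝ) 1) := uniqueDiffOn_Icc one_pos
  set s : Set ℝ := Icc 0 1 with hs
  set D := derivWithin h s with hD
  have hCn : ContDiffOn ℝ (2:ℕ) h s := by exact_mod_cast hC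
  have hDC : ContDiffOn ℝ 1 D s := hC.derivWithin hUD (by norm_num)
  have hDdiff : DifferentiableOn ℝ D s := hDC.differentiableOn one_ne_zero
  have hhdiff : DifferentiableOn ℝ h s := hC.differentiableOn (by norm_num)
  have hDzero : ∀ x ∈ s, derivWithin D s x = 0 := by
    intro x hx
    have := h2 x hx
    rw [show (2:ℕ) = 1 + 1 from rfl, iteratedDerivWithin_succ] at this
    have heq : Set.EqOn (iteratedDerivWithin 1 h s) D s := fun y hy =>
      congrFun iteratedDerivWithin_one y
    rwa [derivWithin_congr heq (heq hx)] at this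
  have hDconst : ∀ x ∈ s, D x = D 0 :=
    constant_of_derivWithin_zero (a := 0) (b := 1) hDdiff
      (fun x hx => hDzero x (Ico_subset_Icc_self hx))
  refine ⟨hDconst, ?_⟩
  set E := fun x : ℝ => h x - D 0 * x with hE
  have hEdiff : DifferentiableOn ℝ E s := by
    intro x hx
    exact ((hhdiff x hx).sub (((hasDerivAt_id x).const_mul (D 0)).differentiableAt.differentiableWithinAt))
  have hEderiv : ∀ x ∈ s, derivWithin E s x = 0 := by
    intro x hx
    have h1 : HasDerivWithinAt h (D x) s x := (hhdiff x hx).hasDerivWithinAt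
    have h2' : HasDerivWithinAt (fun y : ℝ => D 0 * y) (D 0 * 1) s x :=
      ((hasDerivAt_id x).const_mul (D 0)).hasDerivWithinAt
    have : derivWithin E s x = D x - D 0 * 1 := (h1.sub h2').derivWithin (hUD x hx)
    rw [this, hDconst x hx]; ring
  have hEconst : ∀ x ∈ s, E x = E 0 :=
    constant_of_derivWithin_zero (a := 0) (b := 1) hEdiff
      (fun x hx => hEderiv x (Ico_subset_Icc_self hx))
  intro x hx
  have := hEconst x hx
  simp only [hE] at this
  have h0 : h 0 - D 0 * 0 = h 0 := by ring
  linarith [this]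

/-- continuous extension of a continuous-on-Icc function -/
lemma tadpole_ext {f : ℝ → ℝ} (hf : ContinuousOn f (Icc 0 1)) :
    ∃ g : ℝ → ℝ, Continuous g ∧ ∀ x ∈ Icc (0:ℝ) 1, g x = f x := by
  refine ⟨IccExtend zero_le_one ((Icc (0:ℝ) 1).restrict f), ?_, ?_⟩
  · exact Continuous.Icc_extend' (continuousOn_iff_continuous_restrict.1 hf)
  · intro x hx
    rw [IccExtend_of_mem _ _ hx]
    rfl

/-- The difference of two solutions of the same edge ODE is affine on `[0,1]`. -/
lemma tadpole_diff_affine {φ ψ f : ℝ → ℝ} {k : ℝ} (hk : k ≠ 0)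
    (hφC : ContDiffOn ℝ 2 φ (Icc 0 1)) (hψC : ContDiffOn ℝ 2 ψ (Icc 0 1))
    (hφ : ∀ x ∈ Icc (0:ℝ) 1, -(k * iteratedDerivWithin 2 φ (Icc 0 1) x) = f x)
    (hψ : ∀ x ∈ Icc (0:ℝ) 1, -(k * iteratedDerivWithin 2 ψ (Icc 0 1) x) = f x) :
    ∃ α β : ℝ, (∀ x ∈ Icc (0:ℝ) 1, φ x - ψ x = α + β * x) ∧
      (∀ x ∈ Icc (0:ℝ) 1,
        derivWithin φ (Icc 0 1) x - derivWithin ψ (Icc 0 1) x = β) := by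
  have hUD : UniqueDiffOn ℝ (Icc (0:ℝ) 1) := uniqueDiffOn_Icc one_pos
  set s : Set ℝ := Icc 0 1 with hs
  set h := φ - ψ with hhdef
  have hφn : ContDiffOn ℝ (2:ℕ) φ s := by exact_mod_cast hφC
  have hψn : ContDiffOn ℝ (2:ℕ) ψ s := by exact_mod_cast hψC
  have hhC : ContDiffOn ℝ 2 h s := hφC.sub hψC
  have h2 : ∀ x ∈ s, iteratedDerivWithin 2 h s x = 0 := by
    intro x hx
    rw [hhdef, iteratedDerivWithin_sub hx hUD (hφn x hx) (hψn x hx)]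
    have e1 := hφ x hx
    have e2 := hψ x hx
    have : k * (iteratedDerivWithin 2 φ s x - iteratedDerivWithin 2 ψ s x) = 0 := by
      rw [mul_sub]; linarith
    have := mul_eq_zero.1 this
    rcases this with h' | h'
    · exact absurd h' hk
    · linarith [h']
  obtain ⟨hconst, hrepr⟩ := tadpole_affine hhC h2
  have hφdiff : DifferentiableOn ℝ φ s := hφC.differentiableOn (by norm_num)
  have hψdiff : DifferentiableOn ℝ ψ s := hψC.differentiableOn (by norm_num)
  have hdsub : ∀ x ∈ s, derivWithin h s x =
      derivWithin φ s x - derivWithin ψ s x := by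
    intro x hx
    have h1 : HasDerivWithinAt φ (derivWithin φ s x) s x := (hφdiff x hx).hasDerivWithinAt
    have h2' : HasDerivWithinAt ψ (derivWithin ψ s x) s x := (hψdiff x hx).hasDerivWithinAt
    exact (h1.sub h2').derivWithin (hUD x hx)
  have h0 : (0:ℝ) ∈ s := by simp [hs]
  refine ⟨φ 0 - ψ 0, derivWithin h s 0, ?_, ?_⟩
  · intro x hx
    have := hrepr x hx
    simpa [hhdef] using this
  · intro x hx
    rw [← hdsub x hx, hconst x hx]

/-- Classical solution of the three-edge tadpole network problem with all edges of
length `1`: the loop consists of edges `1` and `2` joined at a vertex (coordinate `0`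
of both) and at the internal vertex (coordinate `1` of both), the tail edge `3` joins
the internal vertex (its coordinate `1`) to the external Dirichlet vertex
(coordinate `0`). -/
def IsThreeTadpoleSolution (k₁ k₂ k₃ : ℝ) (f₁ f₂ f₃ : ℝ → ℝ)
    (ψ₁ ψ₂ ψ₃ : ℝ → ℝ) : Prop :=
  ContDiffOn ℝ 2 ψ₁ (Set.Icc 0 1) ∧ ContDiffOn ℝ 2 ψ₂ (Set.Icc 0 1) ∧
  ContDiffOn ℝ 2 ψ₃ (Set.Icc 0 1) ∧
  (∀ x ∈ Set.Icc (0 : ℝ) 1, -(k₁ * iteratedDerivWithin 2 ψ₁ (Set.Icc 0 1) x) = f₁ x) ∧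
  (∀ x ∈ Set.Icc (0 : ℝ) 1, -(k₂ * iteratedDerivWithin 2 ψ₂ (Set.Icc 0 1) x) = f₂ x) ∧
  (∀ x ∈ Set.Icc (0 : ℝ) 1, -(k₃ * iteratedDerivWithin 2 ψ₃ (Set.Icc 0 1) x) = f₃ x) ∧
  ψ₃ 0 = 0 ∧
  ψ₁ 0 = ψ₂ 0 ∧
  k₁ * derivWithin ψ₁ (Set.Icc 0 1) 0 + k₂ * derivWithin ψ₂ (Set.Icc 0 1) 0 = 0 ∧
  ψ₁ 1 = ψ₂ 1 ∧ ψ₂ 1 = ψ₃ 1 ∧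
  k₁ * derivWithin ψ₁ (Set.Icc 0 1) 1 + k₂ * derivWithin ψ₂ (Set.Icc 0 1) 1
    + k₃ * derivWithin ψ₃ (Set.Icc 0 1) 1 = 0

set_option maxHeartbeats 1000000

/-- Well-posedness for a three-phase equilateral tadpole network (Theorem 4.2):
with conductivities `(k₁, k₂, k₃) = (k⁻, k⁺, k⁺)`, `k⁺ > 0 > k⁻`, the problem is
well-posed provided `|k⁻|/k⁺ ≠ 1`. -/
theorem stmt_10 (kp km : ℝ) (hkp : 0 < kp) (hkm : km < 0)
    (hres : |km| / kp ≠ 1)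
    (k₁ k₂ k₃ : ℝ) (hk₁ : k₁ = km) (hk₂ : k₂ = kp) (hk₃ : k₃ = kp)
    (f₁ f₂ f₃ : ℝ → ℝ)
    (hf₁ : ContinuousOn f₁ (Set.Icc 0 1)) (hf₂ : ContinuousOn f₂ (Set.Icc 0 1))
    (hf₃ : ContinuousOn f₃ (Set.Icc 0 1)) :
    ∃ ψ₁ ψ₂ ψ₃ : ℝ → ℝ, IsThreeTadpoleSolution k₁ k₂ k₃ f₁ f₂ f₃ ψ₁ ψ₂ ψ₃ ∧
      ∀ φ₁ φ₂ φ₃ : ℝ → ℝ, IsThreeTadpoleSolution k₁ k₂ k₃ f₁ f₂ f₃ φ₁ φ₂ φ₃ →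
        (∀ x ∈ Set.Icc (0 : ℝ) 1, φ₁ x = ψ₁ x) ∧
        (∀ x ∈ Set.Icc (0 : ℝ) 1, φ₂ x = ψ₂ x) ∧
        (∀ x ∈ Set.Icc (0 : ℝ) 1, φ₃ x = ψ₃ x) := by
  have hk1ne : k₁ ≠ 0 := by rw [hk₁]; exact hkm.ne
  have hk2ne : k₂ ≠ 0 := by rw [hk₂]; exact hkp.ne'
  have hk3ne : k₃ ≠ 0 := by rw [hk₃]; exact hkp.ne'
  have hsum : k₁ + k₂ ≠ 0 := by
    rw [hk₁, hk₂]
    intro h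
    apply hres
    rw [abs_of_neg hkm]
    field_simp
    linarith
  have h0mem : (0:ℝ) ∈ Icc (0:ℝ) 1 := by norm_num
  have h1mem : (1:ℝ) ∈ Icc (0:ℝ) 1 := by norm_num
  obtain ⟨ft₁, hc₁, he₁⟩ := tadpole_ext hf₁
  obtain ⟨ft₂, hc₂, he₂⟩ := tadpole_ext hf₂
  obtain ⟨ft₃, hc₃, he₃⟩ := tadpole_ext hf₃
  set g₁ := fun x : ℝ => -(ft₁ x) / k₁ with hg₁def
  set g₂ := fun x : ℝ => -(ft₂ x) / k₂ with hg₂def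
  set g₃ := fun x : ℝ => -(ft₃ x) / k₃ with hg₃def
  have hg₁ : Continuous g₁ := hc₁.neg.div_const _
  have hg₂ : Continuous g₂ := hc₂.neg.div_const _
  have hg₃ : Continuous g₃ := hc₃.neg.div_const _
  set G₁ := TadpolePrim g₁ with hG₁def
  set G₂ := TadpolePrim g₂ with hG₂def
  set G₃ := TadpolePrim g₃ with hG₃def
  set F₁ := TadpolePrim G₁ with hF₁def
  set F₂ := TadpolePrim G₂ with hF₂def
  set F₃ := TadpolePrim G₃ with hF₃def
  set c : ℝ := F₂ 1 - F₁ 1 with hcdef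
  set b₁ : ℝ := k₂ * c / (k₁ + k₂) with hb₁def
  set b₂ : ℝ := b₁ - c with hb₂def
  set b₃ : ℝ := -(k₁ * G₁ 1 + k₂ * G₂ 1 + k₃ * G₃ 1) / k₃ with hb₃def
  set a₂ : ℝ := b₃ + F₃ 1 - b₂ - F₂ 1 with ha₂def
  obtain ⟨M1C, M1I, M1D⟩ := tadpole_master hg₁ a₂ b₁
  obtain ⟨M2C, M2I, M2D⟩ := tadpole_master hg₂ a₂ b₂
  obtain ⟨M3C, M3I, M3D⟩ := tadpole_master hg₃ 0 b₃
  rw [← hG₁def] at M1D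
  rw [← hG₂def] at M2D
  rw [← hG₃def] at M3D
  have hG10 : G₁ 0 = 0 := tadpolePrim_zero g₁
  have hG20 : G₂ 0 = 0 := tadpolePrim_zero g₂
  set ψ₁ := fun x : ℝ => a₂ + b₁ * x + F₁ x with hψ₁def
  set ψ₂ := fun x : ℝ => a₂ + b₂ * x + F₂ x with hψ₂def
  set ψ₃ := fun x : ℝ => 0 + b₃ * x + F₃ x with hψ₃def
  have hbal : k₁ * b₁ + k₂ * b₂ = 0 := by
    rw [hb₂def, hb₁def]; field_simp; ring
  refine ⟨ψ₁, ψ₂, ψ₃, ⟨M1C, M2C, M3C, ?_, ?_, ?_, ?_, ?_, ?_, ?_, ?_, ?_⟩, ?_⟩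
  · intro x hx; rw [M1I x hx]
    have := he₁ x hx
    simp only [hg₁def]; field_simp
    linarith
  · intro x hx; rw [M2I x hx]
    have := he₂ x hx
    simp only [hg₂def]; field_simp
    linarith
  · intro x hx; rw [M3I x hx]
    have := he₃ x hx
    simp only [hg₃def]; field_simp
    linarith
  · show 0 + b₃ * 0 + F₃ 0 = 0
    rw [show F₃ 0 = 0 from tadpolePrim_zero G₃]; ring
  · show a₂ + b₁ * 0 + F₁ 0 = a₂ + b₂ * 0 + F₂ 0
    rw [show F₁ 0 = 0 from tadpolePrim_zero G₁, show F₂ 0 = 0 from tadpolePrim_zero G₂]; ring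
  · rw [M1D 0 h0mem, M2D 0 h0mem, hG10, hG20]
    simpa using hbal
  · show a₂ + b₁ * 1 + F₁ 1 = a₂ + b₂ * 1 + F₂ 1
    rw [hb₂def, hcdef]; ring
  · show a₂ + b₂ * 1 + F₂ 1 = 0 + b₃ * 1 + F₃ 1
    rw [ha₂def]; ring
  · rw [M1D 1 h1mem, M2D 1 h1mem, M3D 1 h1mem]
    have hb3 : k₃ * b₃ = -(k₁ * G₁ 1 + k₂ * G₂ 1 + k₃ * G₃ 1) := by
      rw [hb₃def]; field_simp
    linarith [hbal, hb3]
  · rintro φ₁ φ₂ φ₃ ⟨P1C, P2C, P3C, P1I, P2I, P3I, Q1, Q2, Q3, Q4, Q5, Q6⟩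
    have S1 : ∀ x ∈ Icc (0:ℝ) 1, -(k₁ * iteratedDerivWithin 2 ψ₁ (Icc 0 1) x) = f₁ x := by
      intro x hx; rw [M1I x hx]; have := he₁ x hx; simp only [hg₁def]; field_simp; linarith
    have S2 : ∀ x ∈ Icc (0:ℝ) 1, -(k₂ * iteratedDerivWithin 2 ψ₂ (Icc 0 1) x) = f₂ x := by
      intro x hx; rw [M2I x hx]; have := he₂ x hx; simp only [hg₂def]; field_simp; linarith
    have S3 : ∀ x ∈ Icc (0:ℝ) 1, -(k₃ * iteratedDerivWithin 2 ψ₃ (Icc 0 1) x) = f₃ x := by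
      intro x hx; rw [M3I x hx]; have := he₃ x hx; simp only [hg₃def]; field_simp; linarith
    obtain ⟨α₁, β₁, R1, D1⟩ := tadpole_diff_affine hk1ne P1C M1C P1I S1
    obtain ⟨α₂, β₂, R2, D2⟩ := tadpole_diff_affine hk2ne P2C M2C P2I S2
    obtain ⟨α₃, β₃, R3, D3⟩ := tadpole_diff_affine hk3ne P3C M3C P3I S3
    -- boundary values of ψ's
    have hψ₃0 : ψ₃ 0 = 0 := by
      have hF30 : F₃ 0 = 0 := tadpolePrim_zero G₃
      show 0 + b₃ * 0 + F₃ 0 = 0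
      rw [hF30]; ring
    have hψ₁₂0 : ψ₁ 0 = ψ₂ 0 := by
      show a₂ + b₁ * 0 + F₁ 0 = a₂ + b₂ * 0 + F₂ 0
      rw [show F₁ 0 = 0 from tadpolePrim_zero G₁, show F₂ 0 = 0 from tadpolePrim_zero G₂]; ring
    have hψ₁₂1 : ψ₁ 1 = ψ₂ 1 := by
      show a₂ + b₁ * 1 + F₁ 1 = a₂ + b₂ * 1 + F₂ 1
      rw [hb₂def, hcdef]; ring
    have hψ₂₃1 : ψ₂ 1 = ψ₃ 1 := by
      show a₂ + b₂ * 1 + F₂ 1 = 0 + b₃ * 1 + F₃ 1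
      rw [ha₂def]; ring
    have hψK0 : k₁ * derivWithin ψ₁ (Icc 0 1) 0 + k₂ * derivWithin ψ₂ (Icc 0 1) 0 = 0 := by
      rw [M1D 0 h0mem, M2D 0 h0mem, hG10, hG20]
      simpa using hbal
    have hψK1 : k₁ * derivWithin ψ₁ (Icc 0 1) 1 + k₂ * derivWithin ψ₂ (Icc 0 1) 1
        + k₃ * derivWithin ψ₃ (Icc 0 1) 1 = 0 := by
      rw [M1D 1 h1mem, M2D 1 h1mem, M3D 1 h1mem]
      have hb3 : k₃ * b₃ = -(k₁ * G₁ 1 + k₂ * G₂ 1 + k₃ * G₃ 1) := by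
        rw [hb₃def]; field_simp
      linarith [hbal, hb3]
    -- derive the linear relations on α, β
    have r10 := R1 0 h0mem; have r20 := R2 0 h0mem; have r30 := R3 0 h0mem
    have r11 := R1 1 h1mem; have r21 := R2 1 h1mem; have r31 := R3 1 h1mem
    have d10 := D1 0 h0mem; have d20 := D2 0 h0mem
    have d11 := D1 1 h1mem; have d21 := D2 1 h1mem; have d31 := D3 1 h1mem
    have hα₃ : α₃ = 0 := by
      have : φ₃ 0 - ψ₃ 0 = α₃ + β₃ * 0 := r30
      rw [Q1, hψ₃0] at this; linarith
    have hα₁₂ : α₁ = α₂ := by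
      have h1 : φ₁ 0 - ψ₁ 0 = α₁ + β₁ * 0 := r10
      have h2 : φ₂ 0 - ψ₂ 0 = α₂ + β₂ * 0 := r20
      rw [Q2] at h1; rw [hψ₁₂0] at h1; linarith
    have hK0 : k₁ * β₁ + k₂ * β₂ = 0 := by
      have e1 : k₁ * (derivWithin φ₁ (Icc (0:ℝ) 1) 0 - derivWithin ψ₁ (Icc (0:ℝ) 1) 0)
          = k₁ * β₁ := by rw [d10]
      have e2 : k₂ * (derivWithin φ₂ (Icc (0:ℝ) 1) 0 - derivWithin ψ₂ (Icc (0:ℝ) 1) 0)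
          = k₂ * β₂ := by rw [d20]
      ring_nf at e1 e2
      linarith [Q3, hψK0, e1, e2]
    have hβ₁₂ : α₁ + β₁ = α₂ + β₂ := by
      have h1 : φ₁ 1 - ψ₁ 1 = α₁ + β₁ * 1 := r11
      have h2 : φ₂ 1 - ψ₂ 1 = α₂ + β₂ * 1 := r21
      rw [Q4] at h1; rw [hψ₁₂1] at h1; linarith
    have hβ₂₃ : α₂ + β₂ = α₃ + β₃ := by
      have h1 : φ₂ 1 - ψ₂ 1 = α₂ + β₂ * 1 := r21
      have h2 : φ₃ 1 - ψ₃ 1 = α₃ + β₃ * 1 := r31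
      rw [Q5] at h1; rw [hψ₂₃1] at h1; linarith
    have hK1 : k₁ * β₁ + k₂ * β₂ + k₃ * β₃ = 0 := by
      have e1 : k₁ * (derivWithin φ₁ (Icc (0:ℝ) 1) 1 - derivWithin ψ₁ (Icc (0:ℝ) 1) 1)
          = k₁ * β₁ := by rw [d11]
      have e2 : k₂ * (derivWithin φ₂ (Icc (0:ℝ) 1) 1 - derivWithin ψ₂ (Icc (0:ℝ) 1) 1)
          = k₂ * β₂ := by rw [d21]
      have e3 : k₃ * (derivWithin φ₃ (Icc (0:ℝ) 1) 1 - derivWithin ψ₃ (Icc (0:ℝ) 1) 1)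
          = k₃ * β₃ := by rw [d31]
      ring_nf at e1 e2 e3
      linarith [Q6, hψK1, e1, e2, e3]
    have hβ₃ : β₃ = 0 := by
      have : k₃ * β₃ = 0 := by linarith
      rcases mul_eq_zero.1 this with h | h
      · exact absurd h hk3ne
      · exact h
    have hβeq : β₁ = β₂ := by linarith
    have hβ₁ : β₁ = 0 := by
      have : (k₁ + k₂) * β₁ = 0 := by rw [hβeq] at hK0 ⊢; linarith [hK0]
      rcases mul_eq_zero.1 this with h | h
      · exact absurd h hsum
      · exact h
    have hβ₂ : β₂ = 0 := by linarith
    have hα₂0 : α₂ = 0 := by linarith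
    have hα₁0 : α₁ = 0 := by linarith
    refine ⟨?_, ?_, ?_⟩
    · intro x hx; have := R1 x hx; rw [hα₁0, hβ₁] at this; linarith
    · intro x hx; have := R2 x hx; rw [hα₂0, hβ₂] at this; linarith
    · intro x hx; have := R3 x hx; rw [hα₃, hβ₃] at this; linarith
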